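/- arXiv:math/0609749 — 2 statements merged into one kernel-verified Lean document; each statement's English description precedes it below -/
import Mathlib

section
/- Let p be a prime number and n a positive integer. For every positive integer r, and also for r = ∞, one has a_r(p^n) = PL_r(n), i.e. the total number of group-partitions with at most r factors, summed over all isomorphism classes of abelian groups of order p^n, equals the number of plane partitions of n with at most r nonzero rows. -/
open scoped ENat

/-- A group-partition: a finite weakly descending (each factor embeds in the previous one)
sequence of nontrivial finite abelian groups, recording the sequence of isomorphism classes
`G₁ ⊇ G₂ ⊇ ⋯` of a decomposition `G = G₁ ⊕ G₂ ⊕ ⋯`. -/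
structure AbGroupPartition : Type 1 where
  len : ℕ
  factor : Fin len → Type
  [grp : ∀ j, AddCommGroup (factor j)]
  [fin : ∀ j, Finite (factor j)]
  nontriv : ∀ j, Nontrivial (factor j)
  mono : ∀ (j : ℕ) (h : j + 1 < len),
    ∃ f : factor ⟨j + 1, h⟩ →+ factor ⟨j, Nat.lt_of_succ_lt h⟩, Function.Injective f

attribute [instance] AbGroupPartition.grp AbGroupPartition.fin

/-- `P` is a group-partition of `G`, i.e. `G ≅ G₁ ⊕ ⋯ ⊕ G_len`. -/
def AbGroupPartition.IsPartitionOf (P : AbGroupPartition) (G : Type*) [AddCommGroup G] : Prop :=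
  Nonempty (G ≃+ ((j : Fin P.len) → P.factor j))

/-- Componentwise isomorphism of group-partitions (i.e. equality of the underlying
sequences of isomorphism classes). -/
def AbGroupPartition.Equiv (P Q : AbGroupPartition) : Prop :=
  ∃ h : P.len = Q.len, ∀ j : Fin P.len, Nonempty (P.factor j ≃+ Q.factor (Fin.cast h j))

/-- `π_r(G)`: the number of group-partitions of `G` with at most `r` factors
(`r = ⊤` meaning no restriction on the number of factors). -/
noncomputable def partitionCount (r : ℕ∞) (G : Type*) [AddCommGroup G] : ℕ :=
  Nat.card (Quot fun P Q : {P : AbGroupPartition // P.IsPartitionOf G ∧ (P.len : ℕ∞) ≤ r} =>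
    P.1.Equiv Q.1)

/-- `a_r(n) = ∑_{|G| = n} π_r(G)`: the number of isomorphism classes of pairs of
a finite abelian group of order `n` together with a group-partition of it with at most `r`
factors (`r = ⊤` meaning no restriction). -/
noncomputable def abelianCount (r : ℕ∞) (n : ℕ) : ℕ :=
  Nat.card (Quot fun P Q : {P : AbGroupPartition //
      (∏ j, Nat.card (P.factor j)) = n ∧ (P.len : ℕ∞) ≤ r} => P.1.Equiv Q.1)

/-- A plane partition of `n`: a doubly indexed family of nonnegative integers, weakly
decreasing along each row and column, with finite support and total sum `n`. -/
structure PlanePartition (n : ℕ) where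
  part : ℕ → ℕ → ℕ
  decr_row : ∀ j k, part j (k + 1) ≤ part j k
  decr_col : ∀ j k, part (j + 1) k ≤ part j k
  finite : (Function.support fun x : ℕ × ℕ => part x.1 x.2).Finite
  sum_eq : ∑ᶠ (j : ℕ) (k : ℕ), part j k = n

/-- `PL_r(n)`: the number of plane partitions of `n` with at most `r` nonzero rows
(rows are indexed from `0`, so "at most `r` nonzero rows" means row `j` vanishes
whenever `r ≤ j`); `r = ⊤` counts all plane partitions. -/
noncomputable def planePartitionCount (r : ℕ∞) (n : ℕ) : ℕ :=
  Nat.card {P : PlanePartition n // ∀ j : ℕ, r ≤ (j : ℕ∞) → ∀ k, P.part j k = 0}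


section Aux
variable {p : ℕ} (hp : p.Prime)

/-- Transport `ZMod` along an equality. -/
def zmodCast {a b : ℕ} (h : a = b) : ZMod a ≃+ ZMod b := h ▸ AddEquiv.refl (ZMod a)

/-- An injective additive hom `ZMod (p^a) →+ ZMod (p^b)` when `a ≤ b`. -/
noncomputable def zmodPowHom {a b : ℕ} (h : a ≤ b) : ZMod (p ^ a) →+ ZMod (p ^ b) where
  toFun x := ((x.val * p ^ (b - a) : ℕ) : ZMod (p ^ b))
  map_zero' := by
    haveI : NeZero (p ^ a) := ⟨pow_ne_zero _ hp.ne_zero⟩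
    simp
  map_add' x y := by
    haveI : NeZero (p ^ a) := ⟨pow_ne_zero _ hp.ne_zero⟩
    have key : ∀ s : ℕ, (((s % p ^ a) * p ^ (b - a) : ℕ) : ZMod (p ^ b))
        = ((s * p ^ (b - a) : ℕ) : ZMod (p ^ b)) := by
      intro s
      conv_rhs => rw [← Nat.div_add_mod s (p ^ a)]
      push_cast
      have : ((p : ZMod (p ^ b)) ^ a) * ((p : ZMod (p^b)) ^ (b - a)) = 0 := by
        rw [← pow_add, ← Nat.add_sub_assoc h, Nat.add_sub_cancel_left, ← Nat.cast_pow,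
          ZMod.natCast_self]
      linear_combination (-((s / p ^ a : ℕ) : ZMod (p ^ b))) * this
    show (((x + y).val * p ^ (b - a) : ℕ) : ZMod (p ^ b)) = _
    rw [ZMod.val_add, key, Nat.add_mul]
    push_cast
    ring

theorem zmodPowHom_injective {a b : ℕ} (h : a ≤ b) :
    Function.Injective (zmodPowHom hp h) := by
  haveI : NeZero (p ^ a) := ⟨pow_ne_zero _ hp.ne_zero⟩
  rw [injective_iff_map_eq_zero]
  intro x hx
  haveI : NeZero (p ^ b) := ⟨pow_ne_zero _ hp.ne_zero⟩
  have hx' : ((x.val * p ^ (b - a) : ℕ) : ZMod (p ^ b)) = 0 := hx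
  have hd : (p : ℕ) ^ b ∣ x.val * p ^ (b - a) := by
    rwa [ZMod.natCast_eq_zero_iff] at hx'
  have hb : (p : ℕ) ^ b = p ^ a * p ^ (b - a) := by
    rw [← pow_add, Nat.add_sub_cancel' h]
  have : (p : ℕ) ^ a ∣ x.val := by
    have hpos : 0 < p ^ (b - a) := pow_pos hp.pos _
    rw [hb] at hd
    exact (Nat.mul_dvd_mul_iff_right hpos).mp hd
  have hv : x.val = 0 := by
    by_contra hne
    exact absurd (Nat.le_of_dvd (Nat.pos_of_ne_zero hne) this) (not_le.mpr x.val_lt)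
  exact (ZMod.val_eq_zero x).mp hv

include hp in
/-- The `p`-torsion elements divisible by `p^c`, in `ZMod (p^m)`. -/
theorem card_pSock (m c : ℕ) :
    Nat.card {z : ZMod (p ^ m) // p • z = 0 ∧ ∃ y, p ^ c • y = z}
      = p ^ (if c + 1 ≤ m then 1 else 0) := by
  haveI : NeZero (p ^ m) := ⟨pow_ne_zero _ hp.ne_zero⟩
  by_cases hcm : c + 1 ≤ m
  · rw [if_pos hcm, pow_one]
    have hm1 : 0 < m := lt_of_lt_of_le (Nat.succ_pos c) hcm
    have hsplit : (p : ℕ) ^ m = p ^ (m - 1) * p := by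
      rw [← pow_succ]; congr 1; omega
    have e : ZMod p ≃ {z : ZMod (p ^ m) // p • z = 0 ∧ ∃ y, p ^ c • y = z} := by
      haveI : NeZero p := ⟨hp.ne_zero⟩
      refine ⟨fun x => ⟨((x.val * p ^ (m - 1) : ℕ) : ZMod (p ^ m)), ?_, ?_⟩,
        fun z => ((z.1.val / p ^ (m - 1) : ℕ) : ZMod p), ?_, ?_⟩
      · rw [nsmul_eq_mul, ← Nat.cast_mul, ZMod.natCast_eq_zero_iff]
        exact ⟨x.val, by rw [hsplit]; ring⟩
      · refine ⟨((x.val * p ^ (m - 1 - c) : ℕ) : ZMod (p ^ m)), ?_⟩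
        rw [nsmul_eq_mul, ← Nat.cast_mul]
        congr 1
        rw [Nat.mul_left_comm, ← pow_add]
        congr 2
        omega
      · intro x
        have hlt : x.val * p ^ (m - 1) < p ^ m := by
          calc x.val * p ^ (m - 1) < p * p ^ (m - 1) :=
                Nat.mul_lt_mul_of_pos_right x.val_lt (pow_pos hp.pos _)
            _ = p ^ m := by rw [hsplit, Nat.mul_comm]
        simp only [ZMod.val_natCast_of_lt hlt]
        rw [Nat.mul_div_cancel _ (pow_pos hp.pos _)]
        exact ZMod.natCast_rightInverse x
      · rintro ⟨z, hz1, hz2⟩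
        have hz1' : ((p * z.val : ℕ) : ZMod (p ^ m)) = 0 := by
          push_cast
          rw [ZMod.natCast_val, ZMod.cast_id, ← nsmul_eq_mul]
          exact hz1
        have hdvd : (p : ℕ) ^ (m - 1) ∣ z.val := by
          have h1 : (p : ℕ) ^ m ∣ p * z.val := by
            rwa [ZMod.natCast_eq_zero_iff] at hz1'
          have h1' : (p : ℕ) ^ (m - 1) * p ∣ z.val * p := by
            rw [← hsplit]; rwa [Nat.mul_comm p z.val] at h1
          exact (Nat.mul_dvd_mul_iff_right hp.pos).mp h1'
        have hq : z.val / p ^ (m - 1) < p := by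
          rw [Nat.div_lt_iff_lt_mul (pow_pos hp.pos _)]
          calc z.val < p ^ m := z.val_lt
            _ = p * p ^ (m - 1) := by rw [hsplit, Nat.mul_comm]
        apply Subtype.ext
        simp only
        rw [ZMod.val_natCast_of_lt hq, Nat.div_mul_cancel hdvd]
        exact ZMod.natCast_rightInverse z
    rw [Nat.card_congr e.symm, Nat.card_zmod]
  · rw [if_neg hcm, pow_zero]
    have hmc : m ≤ c := by omega
    haveI : Unique {z : ZMod (p ^ m) // p • z = 0 ∧ ∃ y, p ^ c • y = z} := by
      have hzero : ∀ z : {z : ZMod (p ^ m) // p • z = 0 ∧ ∃ y, p ^ c • y = z}, z.1 = 0 := by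
        rintro ⟨z, _, y, hy⟩
        have hpc : ((p ^ c : ℕ) : ZMod (p ^ m)) = 0 := by
          rw [ZMod.natCast_eq_zero_iff]
          exact pow_dvd_pow p hmc
        show z = 0
        rw [← hy, nsmul_eq_mul, hpc, zero_mul]
      exact ⟨⟨⟨0, by simp, ⟨0, by simp⟩⟩⟩, fun z => Subtype.ext ((hzero z).trans rfl)⟩
    exact Nat.card_unique

include hp in
theorem card_pSock_pi {N : ℕ} (lam : Fin N → ℕ) (c : ℕ) :
    Nat.card {x : (i : Fin N) → ZMod (p ^ lam i) // p • x = 0 ∧ ∃ y, p ^ c • y = x}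
      = p ^ (Finset.univ.filter fun i => c + 1 ≤ lam i).card := by
  classical
  have e1 : {x : (i : Fin N) → ZMod (p ^ lam i) // p • x = 0 ∧ ∃ y, p ^ c • y = x}
      ≃ {x : (i : Fin N) → ZMod (p ^ lam i) // ∀ i, p • x i = 0 ∧ ∃ y, p ^ c • y = x i} := by
    apply Equiv.subtypeEquivRight
    intro x
    constructor
    · rintro ⟨h1, y, hy⟩ i
      exact ⟨by rw [← Pi.smul_apply, h1]; rfl, y i, by rw [← Pi.smul_apply, hy]⟩
    · intro h
      refine ⟨funext fun i => (h i).1, fun i => Classical.choose (h i).2, funext fun i => ?_⟩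
      exact Classical.choose_spec (h i).2
  rw [Nat.card_congr (e1.trans (@Equiv.subtypePiEquivPi (Fin N) (fun i => ZMod (p ^ lam i)) (fun i b => p • b = 0 ∧ ∃ y, p ^ c • y = b))), Nat.card_pi]
  have : ∀ i : Fin N, Nat.card {z : ZMod (p ^ lam i) // p • z = 0 ∧ ∃ y, p ^ c • y = z}
      = p ^ (if c + 1 ≤ lam i then 1 else 0) := fun i => card_pSock hp (lam i) c
  rw [Finset.prod_congr rfl fun i _ => this i, Finset.prod_pow_eq_pow_sum]
  congr 1
  simp [Finset.sum_boole]

include hp in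
theorem conj_card_le {M N : ℕ} (mu : Fin M → ℕ) (lam : Fin N → ℕ)
    (f : ((i : Fin M) → ZMod (p ^ mu i)) →+ ((i : Fin N) → ZMod (p ^ lam i)))
    (hf : Function.Injective f) (c : ℕ) :
    (Finset.univ.filter fun i => c + 1 ≤ mu i).card
      ≤ (Finset.univ.filter fun i => c + 1 ≤ lam i).card := by
  classical
  haveI : ∀ q : ℕ, NeZero (p ^ q) := fun q => ⟨pow_ne_zero _ hp.ne_zero⟩
  have key : Nat.card {x : (i : Fin M) → ZMod (p ^ mu i) // p • x = 0 ∧ ∃ y, p ^ c • y = x}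
      ≤ Nat.card {x : (i : Fin N) → ZMod (p ^ lam i) // p • x = 0 ∧ ∃ y, p ^ c • y = x} := by
    apply Nat.card_le_card_of_injective
      (fun x => ⟨f x.1, by rw [← map_nsmul, x.2.1, map_zero], f (Classical.choose x.2.2),
        by rw [← map_nsmul, Classical.choose_spec x.2.2]⟩)
    intro a b hab
    exact Subtype.ext (hf (congrArg Subtype.val hab))
  rw [card_pSock_pi hp mu c, card_pSock_pi hp lam c] at key
  exact (Nat.pow_le_pow_iff_right hp.one_lt).mp key

theorem antitone_le_of_conj {N : ℕ} {mu lam : Fin N → ℕ} (hmu : Antitone mu)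
    (hlam : Antitone lam)
    (h : ∀ c, (Finset.univ.filter fun i => c + 1 ≤ mu i).card
      ≤ (Finset.univ.filter fun i => c + 1 ≤ lam i).card) (i : Fin N) : mu i ≤ lam i := by
  classical
  by_contra hi
  push_neg at hi
  have h1 : Finset.Iic i ⊆ Finset.univ.filter fun i' => lam i + 1 ≤ mu i' := by
    intro i' hi'
    rw [Finset.mem_Iic] at hi'
    exact Finset.mem_filter.mpr ⟨Finset.mem_univ _, le_trans hi (hmu hi')⟩
  have h2 : (Finset.univ.filter fun i' => lam i + 1 ≤ lam i') ⊆ Finset.Iio i := by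
    intro i' hi'
    rw [Finset.mem_filter] at hi'
    rw [Finset.mem_Iio]
    by_contra hle
    push_neg at hle
    exact absurd (le_trans hi'.2 (hlam hle)) (by omega)
  have := le_trans (le_trans (Finset.card_le_card h1) (h (lam i)))
    (Finset.card_le_card h2)
  rw [Fin.card_Iic, Fin.card_Iio] at this
  omega

/-- Dropping subsingleton components of a product of additive groups. -/
def dropTrivial {ι : Type*} (P : ι → Prop) [DecidablePred P] (β : ι → Type*)
    [∀ i, AddCommMonoid (β i)] (hs : ∀ i, ¬ P i → Subsingleton (β i)) :
    ((i : ι) → β i) ≃+ ((i : {i // P i}) → β i.1) where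
  toFun x := fun i => x i.1
  invFun x := fun i => if h : P i then x ⟨i, h⟩ else 0
  left_inv x := by
    funext i
    by_cases h : P i
    · simp [h]
    · haveI := hs i h
      exact Subsingleton.elim _ _
  right_inv x := by
    funext i
    simp [i.2]
  map_add' x y := rfl

/-- Reindexing a product of `ZMod (p ^ _)`s along a matching of the nonzero exponents. -/
def reindexZMod {p : ℕ} {ι κ : Type*} [DecidableEq ι] [DecidableEq κ] (f : ι → ℕ) (g : κ → ℕ)
    (e : {i // f i ≠ 0} ≃ {k // g k ≠ 0}) (he : ∀ i, g (e i).1 = f i.1) :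
    ((i : ι) → ZMod (p ^ f i)) ≃+ ((k : κ) → ZMod (p ^ g k)) := by
  have hsf : ∀ i : ι, ¬ f i ≠ 0 → Subsingleton (ZMod (p ^ f i)) := by
    intro i h
    rw [not_not] at h
    rw [h, pow_zero]
    infer_instance
  have hsg : ∀ k : κ, ¬ g k ≠ 0 → Subsingleton (ZMod (p ^ g k)) := by
    intro k h
    rw [not_not] at h
    rw [h, pow_zero]
    infer_instance
  refine (dropTrivial _ _ hsf).trans (AddEquiv.trans ?_ (dropTrivial _ _ hsg).symm)
  refine AddEquiv.trans (AddEquiv.piCongrRight fun i =>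
    (zmodCast (congrArg (p ^ ·) (he i).symm))) ?_
  exact (RingEquiv.piCongrLeft (fun k : {k // g k ≠ 0} => ZMod (p ^ g k.1)) e).toAddEquiv

theorem tail_zero {K n m : ℕ} (hm : m ≤ n) (lam0 : Fin K → ℕ) (h0 : Antitone lam0)
    (hsum : ∑ i, lam0 i = m) : ∀ i : Fin K, n ≤ (i : ℕ) → lam0 i = 0 := by
  intro i hi
  by_contra hne
  have h1 : ∀ j ∈ Finset.Iic i, 1 ≤ lam0 j := fun j hj =>
    le_trans (Nat.one_le_iff_ne_zero.mpr hne) (h0 (Finset.mem_Iic.mp hj))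
  have h2 : (i : ℕ) + 1 ≤ ∑ j ∈ Finset.Iic i, lam0 j := by
    have hc : ∑ _j ∈ Finset.Iic i, 1 = (i : ℕ) + 1 := by simp [Fin.card_Iic]
    calc (i : ℕ) + 1 = ∑ _j ∈ Finset.Iic i, 1 := hc.symm
      _ ≤ ∑ j ∈ Finset.Iic i, lam0 j := Finset.sum_le_sum h1
  have h3 : ∑ j ∈ Finset.Iic i, lam0 j ≤ m := by
    rw [← hsum]
    exact Finset.sum_le_sum_of_subset (Finset.subset_univ _)
  omega

theorem padAntitone {p : ℕ} {K n m : ℕ} (hm : m ≤ n) (lam0 : Fin K → ℕ) (h0 : Antitone lam0)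
    (hsum : ∑ i, lam0 i = m) :
    ∃ lam : Fin n → ℕ, Antitone lam ∧ (∑ i, lam i) = m ∧
      Nonempty (((i : Fin K) → ZMod (p ^ lam0 i)) ≃+ ((i : Fin n) → ZMod (p ^ lam i))) := by
  classical
  have hzero0 := tail_zero hm lam0 h0 hsum
  refine ⟨fun j => if h : (j : ℕ) < K then lam0 ⟨j, h⟩ else 0, ?_, ?_, ⟨?_⟩⟩
  · intro a b hab
    by_cases ha : (a : ℕ) < K
    · by_cases hb : (b : ℕ) < K
      · simp only [dif_pos ha, dif_pos hb]
        exact h0 (by exact hab)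
      · simp only [dif_pos ha, dif_neg hb]
        exact Nat.zero_le _
    · have hb : ¬ (b : ℕ) < K := fun hb => ha (lt_of_le_of_lt (by exact_mod_cast hab) hb)
      simp only [dif_neg ha, dif_neg hb]
      exact le_refl 0
  · set F : ℕ → ℕ := fun j => if h : j < K then lam0 ⟨j, h⟩ else 0 with hF
    have hl : ∑ j : Fin n, (if h : (j : ℕ) < K then lam0 ⟨j, h⟩ else 0) = ∑ j ∈ Finset.range n, F j :=
      Fin.sum_univ_eq_sum_range F n
    have hr : ∑ j ∈ Finset.range K, F j = m := by
      rw [← hsum, Fin.sum_univ_eq_sum_range F K |>.symm]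
      apply Finset.sum_congr rfl
      intro i _
      simp [hF]
    rw [hl, ← hr]
    rcases le_total n K with hnK | hKn
    · apply Finset.sum_subset (Finset.range_subset_range.mpr hnK)
      intro x hx hnx
      have hxK : x < K := Finset.mem_range.mp hx
      have hnx' : n ≤ x := Nat.le_of_not_lt (fun h => hnx (Finset.mem_range.mpr h))
      simp only [hF, dif_pos hxK]
      exact hzero0 ⟨x, hxK⟩ hnx'
    · refine (Finset.sum_subset (Finset.range_subset_range.mpr hKn) ?_).symm
      intro x _ hnx
      have hxK : ¬ x < K := fun h => hnx (Finset.mem_range.mpr h)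
      simp [hF, hxK]
  · have hlt : ∀ i : Fin K, lam0 i ≠ 0 → (i : ℕ) < n := by
      intro i h
      by_contra hn
      exact h (hzero0 i (Nat.le_of_not_lt hn))
    have hlt2 : ∀ j : Fin n, (if h : (j : ℕ) < K then lam0 ⟨j, h⟩ else 0) ≠ 0 → (j : ℕ) < K := by
      intro j h
      by_contra hK
      rw [dif_neg hK] at h
      exact h rfl
    refine reindexZMod lam0 _
      ⟨fun i => ⟨⟨(i.1 : ℕ), hlt i.1 i.2⟩, ?_⟩, fun j => ⟨⟨(j.1 : ℕ), hlt2 j.1 j.2⟩, ?_⟩,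
        ?_, ?_⟩ ?_
    · simp only [dif_pos i.1.isLt, Fin.eta]
      exact i.2
    · have h2 := j.2
      rw [dif_pos (hlt2 j.1 j.2)] at h2
      exact h2
    · intro i
      exact Subtype.ext (Fin.ext rfl)
    · intro j
      exact Subtype.ext (Fin.ext rfl)
    · intro i
      simp only [Equiv.coe_fn_mk]
      simp only [dif_pos i.1.isLt, Fin.eta]

include hp in
theorem classify (G : Type*) [AddCommGroup G] [Finite G] (n m : ℕ) (hm : m ≤ n)
    (hG : Nat.card G = p ^ m) :
    ∃ lam : Fin n → ℕ, Antitone lam ∧ (∑ i, lam i) = m ∧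
      Nonempty (G ≃+ ((i : Fin n) → ZMod (p ^ lam i))) := by
  classical
  obtain ⟨ι, hι, q, hq, e, ⟨φ0⟩⟩ := AddCommGroup.equiv_directSum_zmod_of_finite G
  let φ1 : G ≃+ ((i : ι) → ZMod (q i ^ e i)) := φ0.trans (DirectSum.addEquivProd _)
  have hcard : ∏ i, (q i ^ e i) = p ^ m := by
    rw [← hG, Nat.card_congr φ1.toEquiv, Nat.card_pi]
    exact Finset.prod_congr rfl fun i _ => (Nat.card_zmod _).symm
  have hqe : ∀ i, q i ^ e i = p ^ (if q i = p then e i else 0) := by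
    intro i
    by_cases h : q i = p
    · simp [h]
    · have he0 : e i = 0 := by
        by_contra he0
        have h1 : q i ∣ p ^ m := by
          refine dvd_trans (dvd_pow_self (q i) he0) ?_
          rw [← hcard]
          exact Finset.dvd_prod_of_mem _ (Finset.mem_univ i)
        exact h ((Nat.prime_dvd_prime_iff_eq (hq i) hp).mp ((hq i).dvd_of_dvd_pow h1))
      simp [h, he0]
  set E : ι → ℕ := fun i => if q i = p then e i else 0 with hE
  let φ2 : G ≃+ ((i : ι) → ZMod (p ^ E i)) :=
    φ1.trans (AddEquiv.piCongrRight fun i => zmodCast (hqe i))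
  have hsum : ∑ i, E i = m := by
    apply Nat.pow_right_injective hp.two_le
    show p ^ (∑ i, E i) = p ^ m
    rw [← Finset.prod_pow_eq_pow_sum, ← hcard]
    exact Finset.prod_congr rfl fun i _ => (hqe i).symm
  -- transport to `Fin K`
  set K := Fintype.card ι with hK
  set σ : Fin K ≃ ι := (Fintype.equivFin ι).symm with hσ
  let φ3 : G ≃+ ((i : Fin K) → ZMod (p ^ E (σ i))) :=
    φ2.trans (RingEquiv.piCongrLeft (fun i : ι => ZMod (p ^ E i)) σ).symm.toAddEquiv
  have hsum' : ∑ i, E (σ i) = m := by rw [Equiv.sum_comp σ E, hsum]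
  -- sort
  set E' : Fin K → ℕ := fun i => E (σ i) with hE'
  set τ : Equiv.Perm (Fin K) := (Fin.revPerm).trans (Tuple.sort E') with hτ
  have hanti0 : Antitone (fun i => E' (τ i)) := by
    intro i j hij
    exact Tuple.monotone_sort E' (Fin.rev_le_rev.mpr hij)
  let φ4 : G ≃+ ((i : Fin K) → ZMod (p ^ E' (τ i))) :=
    φ3.trans (RingEquiv.piCongrLeft (fun i : Fin K => ZMod (p ^ E' i)) τ).symm.toAddEquiv
  have hsum'' : ∑ i, E' (τ i) = m := by rw [Equiv.sum_comp τ E', hsum']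
  obtain ⟨lam, hanti, hlsum, ⟨ψ⟩⟩ := padAntitone (p := p) hm _ hanti0 hsum''
  exact ⟨lam, hanti, hlsum, ⟨φ4.trans ψ⟩⟩

/-- Componentwise additive hom between product groups. -/
def piHom {ι : Type*} {A B : ι → Type*} [∀ i, AddCommMonoid (A i)] [∀ i, AddCommMonoid (B i)]
    (g : ∀ i, A i →+ B i) : ((i : ι) → A i) →+ ((i : ι) → B i) where
  toFun x i := g i (x i)
  map_zero' := funext fun i => map_zero (g i)
  map_add' x y := funext fun i => map_add (g i) _ _

theorem piHom_injective {ι : Type*} {A B : ι → Type*} [∀ i, AddCommMonoid (A i)]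
    [∀ i, AddCommMonoid (B i)] (g : ∀ i, A i →+ B i) (hg : ∀ i, Function.Injective (g i)) :
    Function.Injective (piHom g) :=
  fun _ _ h => funext fun i => hg i (congrFun h i)

theorem finsum_eq_sum_sum (f : ℕ → ℕ → ℕ) (a b : ℕ) (h : ∀ j k, f j k ≠ 0 → j < a ∧ k < b) :
    (∑ᶠ (j : ℕ) (k : ℕ), f j k) = ∑ j ∈ Finset.range a, ∑ k ∈ Finset.range b, f j k := by
  have inner : ∀ j, (∑ᶠ k, f j k) = ∑ k ∈ Finset.range b, f j k := by
    intro j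
    apply finsum_eq_finset_sum_of_support_subset
    intro k hk
    exact Finset.mem_coe.mpr (Finset.mem_range.mpr (h j k hk).2)
  calc (∑ᶠ (j : ℕ) (k : ℕ), f j k) = ∑ᶠ (j : ℕ), ∑ k ∈ Finset.range b, f j k := by
        exact finsum_congr inner
    _ = ∑ j ∈ Finset.range a, ∑ k ∈ Finset.range b, f j k := by
        apply finsum_eq_finset_sum_of_support_subset
        intro j hj
        rw [Function.mem_support] at hj
        obtain ⟨k, _, hfk⟩ : ∃ k ∈ Finset.range b, f j k ≠ 0 := by
          by_contra hc
          push_neg at hc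
          exact hj (Finset.sum_eq_zero hc)
        exact Finset.mem_coe.mpr (Finset.mem_range.mpr (h j k hfk).1)

namespace PlanePartition
variable {n : ℕ} (Q : PlanePartition n)

theorem row_anti (j : ℕ) : Antitone (Q.part j) :=
  antitone_nat_of_succ_le (Q.decr_row j)

theorem col_anti (k : ℕ) : Antitone (fun j => Q.part j k) :=
  antitone_nat_of_succ_le (fun j => Q.decr_col j k)

theorem exists_bound : ∃ N, ∀ j k, Q.part j k ≠ 0 → j < N ∧ k < N := by
  refine ⟨(Q.finite.toFinset.sup fun x => max x.1 x.2) + 1, fun j k h => ?_⟩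
  have hmem : (j, k) ∈ Q.finite.toFinset := Q.finite.mem_toFinset.mpr h
  have h2 : max j k ≤ Q.finite.toFinset.sup fun x => max x.1 x.2 :=
    Finset.le_sup (f := fun x : ℕ × ℕ => max x.1 x.2) hmem
  omega

theorem col_zero (j k : ℕ) (hk : n ≤ k) : Q.part j k = 0 := by
  by_contra h
  obtain ⟨N, hN⟩ := Q.exists_bound
  set a := max N (j + 1) with ha
  set b := max N (k + 1) with hb
  have hbound : ∀ j' k', Q.part j' k' ≠ 0 → j' < a ∧ k' < b := by
    intro j' k' h'
    have := hN j' k' h'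
    omega
  have hsum : ∑ j' ∈ Finset.range a, ∑ k' ∈ Finset.range b, Q.part j' k' = n := by
    rw [← finsum_eq_sum_sum _ a b hbound]
    exact Q.sum_eq
  have hja : j ∈ Finset.range a := Finset.mem_range.mpr (by omega)
  have h1 : ∑ k' ∈ Finset.range b, Q.part j k'
      ≤ ∑ j' ∈ Finset.range a, ∑ k' ∈ Finset.range b, Q.part j' k' :=
    Finset.single_le_sum (f := fun j' => ∑ k' ∈ Finset.range b, Q.part j' k')
      (fun _ _ => Nat.zero_le _) hja
  have h2 : ∑ k' ∈ Finset.range (k + 1), Q.part j k' ≤ ∑ k' ∈ Finset.range b, Q.part j k' :=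
    Finset.sum_le_sum_of_subset (Finset.range_subset_range.mpr (by omega))
  have h3 : k + 1 ≤ ∑ k' ∈ Finset.range (k + 1), Q.part j k' := by
    have : ∀ k' ∈ Finset.range (k + 1), 1 ≤ Q.part j k' := by
      intro k' hk'
      have hk2 : k' ≤ k := Nat.lt_succ_iff.mp (Finset.mem_range.mp hk')
      exact le_trans (Nat.one_le_iff_ne_zero.mpr h) (Q.row_anti j hk2)
    calc k + 1 = ∑ _k' ∈ Finset.range (k + 1), 1 := by simp
      _ ≤ _ := Finset.sum_le_sum this
  omega

theorem row_zero (j k : ℕ) (hj : n ≤ j) : Q.part j k = 0 := by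
  by_contra h
  obtain ⟨N, hN⟩ := Q.exists_bound
  set a := max N (j + 1) with ha
  set b := max N (k + 1) with hb
  have hbound : ∀ j' k', Q.part j' k' ≠ 0 → j' < a ∧ k' < b := by
    intro j' k' h'
    have := hN j' k' h'
    omega
  have hsum : ∑ j' ∈ Finset.range a, ∑ k' ∈ Finset.range b, Q.part j' k' = n := by
    rw [← finsum_eq_sum_sum _ a b hbound]
    exact Q.sum_eq
  have hone : ∀ j' ∈ Finset.range (j + 1), 1 ≤ Q.part j' 0 := by
    intro j' hj'
    have h1 : 1 ≤ Q.part j k := Nat.one_le_iff_ne_zero.mpr h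
    have h2 : Q.part j k ≤ Q.part j 0 := Q.row_anti j (Nat.zero_le k)
    have h3 : Q.part j 0 ≤ Q.part j' 0 := Q.col_anti 0 (by
      exact Finset.mem_range.mp hj' |> Nat.lt_succ_iff.mp)
    omega
  have hb0 : (0 : ℕ) < b := by omega
  have h1 : ∀ j' ∈ Finset.range (j + 1),
      Q.part j' 0 ≤ ∑ k' ∈ Finset.range b, Q.part j' k' :=
    fun j' _ => Finset.single_le_sum (fun _ _ => Nat.zero_le _) (Finset.mem_range.mpr hb0)
  have h2 : j + 1 ≤ ∑ j' ∈ Finset.range (j + 1), ∑ k' ∈ Finset.range b, Q.part j' k' := by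
    calc j + 1 = ∑ _j' ∈ Finset.range (j + 1), 1 := by simp
      _ ≤ ∑ j' ∈ Finset.range (j + 1), Q.part j' 0 := Finset.sum_le_sum hone
      _ ≤ _ := Finset.sum_le_sum h1
  have h3 : ∑ j' ∈ Finset.range (j + 1), ∑ k' ∈ Finset.range b, Q.part j' k'
      ≤ ∑ j' ∈ Finset.range a, ∑ k' ∈ Finset.range b, Q.part j' k' :=
    Finset.sum_le_sum_of_subset (Finset.range_subset_range.mpr (by omega))
  omega

/-- The number of nonzero rows. -/
noncomputable def nrows : ℕ := sInf {j | Q.part j 0 = 0}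

theorem nrows_nonzero_row (j : ℕ) (hj : j < Q.nrows) : Q.part j 0 ≠ 0 :=
  fun h0 => absurd (Nat.sInf_le h0 : Q.nrows ≤ j) (Nat.not_le.mpr hj)

theorem zero_of_nrows_le (j : ℕ) (hj : Q.nrows ≤ j) (k : ℕ) : Q.part j k = 0 := by
  have hne : {j | Q.part j 0 = 0}.Nonempty := ⟨n, Q.row_zero n 0 le_rfl⟩
  have h0 : Q.part Q.nrows 0 = 0 := Nat.sInf_mem hne
  have h1 : Q.part j 0 = 0 := Nat.le_zero.mp (le_trans (Q.col_anti 0 hj) (le_of_eq h0))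
  exact Nat.le_zero.mp (le_trans (Q.row_anti j (Nat.zero_le k)) (le_of_eq h1))

theorem support_lt (j k : ℕ) (h : Q.part j k ≠ 0) : j < Q.nrows ∧ k < n := by
  constructor
  · by_contra hj
    exact h (Q.zero_of_nrows_le j (Nat.le_of_not_lt hj) k)
  · by_contra hk
    exact h (Q.col_zero j k (Nat.le_of_not_lt hk))

theorem sum_rows : ∑ j ∈ Finset.range Q.nrows, ∑ k ∈ Finset.range n, Q.part j k = n := by
  rw [← finsum_eq_sum_sum _ _ _ (fun j k h => Q.support_lt j k h)]
  exact Q.sum_eq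

theorem nrows_eq (L : ℕ) (h : ∀ j, Q.part j 0 = 0 ↔ L ≤ j) : Q.nrows = L := by
  have hs : {j | Q.part j 0 = 0} = Set.Ici L := Set.ext fun j => (h j)
  rw [PlanePartition.nrows, hs, csInf_Ici]

end PlanePartition

variable (p) in
/-- The group-partition associated to a plane partition (for a fixed prime `p`). -/
noncomputable def PlanePartition.toPart {n : ℕ} (hp : p.Prime) (hn : 0 < n)
    (Q : PlanePartition n) : AbGroupPartition where
  len := Q.nrows
  factor j := (i : Fin n) → ZMod (p ^ Q.part j i)
  grp _ := inferInstance
  fin j := by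
    haveI : ∀ q : ℕ, NeZero (p ^ q) := fun q => ⟨pow_ne_zero _ hp.ne_zero⟩
    infer_instance
  nontriv j := by
    have h0 : Q.part j 0 ≠ 0 := Q.nrows_nonzero_row j j.isLt
    have h1 : (1 : ℕ) < p ^ Q.part j ((⟨0, hn⟩ : Fin n) : ℕ) := Nat.one_lt_pow h0 hp.one_lt
    haveI : Nontrivial (ZMod (p ^ Q.part j ((⟨0, hn⟩ : Fin n) : ℕ))) := by
      haveI := Fact.mk h1
      exact ZMod.nontrivial _
    obtain ⟨w, hw⟩ := exists_ne (0 : ZMod (p ^ Q.part j ((⟨0, hn⟩ : Fin n) : ℕ)))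
    refine ⟨Function.update 0 ⟨0, hn⟩ w, 0, fun hEq => hw ?_⟩
    have h2 := congrFun hEq (⟨0, hn⟩ : Fin n)
    rwa [Function.update_self] at h2
  mono j h := ⟨piHom fun i => zmodPowHom hp (Q.decr_col j i),
    piHom_injective _ fun i => zmodPowHom_injective hp _⟩

theorem PlanePartition.toPart_card {p n : ℕ} (hp : p.Prime) (hn : 0 < n)
    (Q : PlanePartition n) : (∏ j, Nat.card ((Q.toPart p hp hn).factor j)) = p ^ n := by
  haveI : ∀ q : ℕ, NeZero (p ^ q) := fun q => ⟨pow_ne_zero _ hp.ne_zero⟩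
  have h1 : ∀ j : Fin Q.nrows, Nat.card ((i : Fin n) → ZMod (p ^ Q.part j i))
      = p ^ (∑ i : Fin n, Q.part j (i : ℕ)) := by
    intro j
    rw [Nat.card_pi, Finset.prod_congr rfl fun (i : Fin n) _ => Nat.card_zmod (p ^ Q.part j i),
      Finset.prod_pow_eq_pow_sum]
  calc ∏ j, Nat.card ((Q.toPart p hp hn).factor j)
      = ∏ j : Fin Q.nrows, p ^ (∑ i : Fin n, Q.part j (i : ℕ)) :=
        Finset.prod_congr rfl fun j _ => h1 j
    _ = p ^ (∑ j : Fin Q.nrows, ∑ i : Fin n, Q.part j (i : ℕ)) :=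
        Finset.prod_pow_eq_pow_sum _ _ _
    _ = p ^ n := by
        congr 1
        have hinner : ∀ j : ℕ, ∑ i : Fin n, Q.part j (i : ℕ) = ∑ k ∈ Finset.range n, Q.part j k :=
          fun j => Fin.sum_univ_eq_sum_range (Q.part j) n
        rw [Fin.sum_univ_eq_sum_range (fun j => ∑ i : Fin n, Q.part j (i : ℕ)) Q.nrows]
        rw [Finset.sum_congr rfl fun j _ => hinner j]
        exact Q.sum_rows

theorem PlanePartition.toPart_len_le {n : ℕ} (Q : PlanePartition n) {r : ℕ∞}
    (hcond : ∀ j : ℕ, r ≤ (j : ℕ∞) → ∀ k, Q.part j k = 0) : ((Q.nrows : ℕ) : ℕ∞) ≤ r := by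
  rcases Nat.eq_zero_or_pos Q.nrows with h0 | hpos
  · rw [h0]
    exact_mod_cast (zero_le : (0 : ℕ∞) ≤ r)
  · have hs : Q.nrows - 1 < Q.nrows := by omega
    have hne : Q.part (Q.nrows - 1) 0 ≠ 0 := Q.nrows_nonzero_row _ hs
    have hlt : ((Q.nrows - 1 : ℕ) : ℕ∞) < r := by
      by_contra hle
      push_neg at hle
      exact hne (hcond _ hle 0)
    have h2 := (ENat.add_one_le_iff (ENat.coe_ne_top _)).mpr hlt
    calc ((Q.nrows : ℕ) : ℕ∞) = ((Q.nrows - 1 : ℕ) : ℕ∞) + 1 := by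
          rw [← Nat.cast_add_one]
          exact_mod_cast (by omega : Q.nrows = Q.nrows - 1 + 1)
      _ ≤ r := h2


theorem PlanePartition.ext' {n : ℕ} {Q1 Q2 : PlanePartition n} (h : Q1.part = Q2.part) :
    Q1 = Q2 := by
  cases Q1
  cases Q2
  simp_all

theorem abEquiv_refl (P : AbGroupPartition) : P.Equiv P :=
  ⟨rfl, fun j => ⟨AddEquiv.refl _⟩⟩

theorem abEquiv_symm {P Q : AbGroupPartition} (h : P.Equiv Q) : Q.Equiv P := by
  obtain ⟨h1, h2⟩ := h
  refine ⟨h1.symm, fun j => ?_⟩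
  have h3 := h2 (Fin.cast h1.symm j)
  have hj : Fin.cast h1 (Fin.cast h1.symm j) = j := by ext; simp
  rw [hj] at h3
  exact h3.map fun e => e.symm

theorem abEquiv_trans {P Q R : AbGroupPartition} (hPQ : P.Equiv Q) (hQR : Q.Equiv R) :
    P.Equiv R := by
  obtain ⟨h1, h2⟩ := hPQ
  obtain ⟨h3, h4⟩ := hQR
  refine ⟨h1.trans h3, fun j => ?_⟩
  have e2 := h4 (Fin.cast h1 j)
  have hj : Fin.cast h3 (Fin.cast h1 j) = Fin.cast (h1.trans h3) j := by ext; simp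
  rw [hj] at e2
  exact Nonempty.map2 (fun a b => a.trans b) (h2 j) e2

theorem toPart_inj {p n : ℕ} (hp : p.Prime) (hn : 0 < n) {Q1 Q2 : PlanePartition n}
    (h : (Q1.toPart p hp hn).Equiv (Q2.toPart p hp hn)) : Q1 = Q2 := by
  obtain ⟨h1, h2⟩ := h
  have hlen : Q1.nrows = Q2.nrows := h1
  apply PlanePartition.ext'
  funext j k
  by_cases hj : j < Q1.nrows
  · by_cases hk : k < n
    · obtain ⟨e⟩ := h2 ⟨j, hj⟩
      have hanti1 : Antitone (fun i : Fin n => Q1.part j (i : ℕ)) :=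
        fun a b hab => Q1.row_anti j (by exact_mod_cast hab)
      have hanti2 : Antitone (fun i : Fin n => Q2.part j (i : ℕ)) :=
        fun a b hab => Q2.row_anti j (by exact_mod_cast hab)
      have e' : ((i : Fin n) → ZMod (p ^ Q1.part j (i : ℕ))) ≃+
          ((i : Fin n) → ZMod (p ^ Q2.part j (i : ℕ))) := e
      have hle1 := fun c => conj_card_le hp _ _ e'.toAddMonoidHom e'.injective c
      have hle2 := fun c => conj_card_le hp _ _ e'.symm.toAddMonoidHom e'.symm.injective c
      have g1 := antitone_le_of_conj hanti1 hanti2 hle1 ⟨k, hk⟩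
      have g2 := antitone_le_of_conj hanti2 hanti1 hle2 ⟨k, hk⟩
      exact le_antisymm g1 g2
    · rw [Q1.col_zero j k (le_of_not_gt hk), Q2.col_zero j k (le_of_not_gt hk)]
  · rw [Q1.zero_of_nrows_le j (le_of_not_gt hj) k,
      Q2.zero_of_nrows_le j (by rw [← hlen]; exact le_of_not_gt hj) k]

theorem exists_plane {p n : ℕ} (hp : p.Prime) (hn : 0 < n) {r : ℕ∞}
    (P : AbGroupPartition) (hcard : (∏ j, Nat.card (P.factor j)) = p ^ n)
    (hlen : (P.len : ℕ∞) ≤ r) :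
    ∃ Q : PlanePartition n, (∀ j : ℕ, r ≤ (j : ℕ∞) → ∀ k, Q.part j k = 0) ∧
      (Q.toPart p hp hn).Equiv P := by
  classical
  have hdvd : ∀ j, Nat.card (P.factor j) ∣ p ^ n := fun j =>
    hcard ▸ Finset.dvd_prod_of_mem _ (Finset.mem_univ j)
  choose m hmle hm using fun j => (Nat.dvd_prime_pow hp).mp (hdvd j)
  have hm1 : ∀ j, 1 ≤ m j := by
    intro j
    by_contra hcon
    push_neg at hcon
    have hz : m j = 0 := by omega
    have h2 : Nat.card (P.factor j) = 1 := by rw [hm j, hz, pow_zero]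
    have h3 := (@Finite.one_lt_card_iff_nontrivial _ (P.fin j)).mpr (P.nontriv j)
    omega
  have hsum_m : ∑ j, m j = n := by
    apply Nat.pow_right_injective hp.two_le
    show p ^ _ = p ^ n
    rw [← Finset.prod_pow_eq_pow_sum, ← hcard]
    exact Finset.prod_congr rfl fun j _ => (hm j).symm
  choose lam hanti hsum hiso using fun j =>
    classify hp (P.factor j) n (m j) (hmle j) (hm j)
  have phi : ∀ j, P.factor j ≃+ ((i : Fin n) → ZMod (p ^ lam j i)) :=
    fun j => Classical.choice (hiso j)
  have hstep : ∀ (j : ℕ) (h : j + 1 < P.len) (i : Fin n),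
      lam ⟨j + 1, h⟩ i ≤ lam ⟨j, Nat.lt_of_succ_lt h⟩ i := by
    intro j h
    obtain ⟨f, hf⟩ := P.mono j h
    refine antitone_le_of_conj (hanti _) (hanti _) (conj_card_le hp _ _
      (((phi ⟨j, Nat.lt_of_succ_lt h⟩).toAddMonoidHom.comp f).comp
        (phi ⟨j + 1, h⟩).symm.toAddMonoidHom) ?_)
    rw [AddMonoidHom.coe_comp, AddMonoidHom.coe_comp]
    exact (((phi ⟨j, Nat.lt_of_succ_lt h⟩).injective.comp hf).comp
      (phi ⟨j + 1, h⟩).symm.injective)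
  set f : ℕ → ℕ → ℕ :=
    fun j k => if h : j < P.len ∧ k < n then lam ⟨j, h.1⟩ ⟨k, h.2⟩ else 0 with hf
  have hfq : ∀ (j : Fin P.len) (i : Fin n), f (j : ℕ) (i : ℕ) = lam j i := by
    intro j i
    simp only [hf, dif_pos (And.intro j.isLt i.isLt), Fin.eta]
  have hbound : ∀ j k, f j k ≠ 0 → j < P.len ∧ k < n := by
    intro j k hjk
    by_contra hcon
    exact hjk (dif_neg hcon)
  have hdr : ∀ j k, f j (k + 1) ≤ f j k := by
    intro j k
    simp only [hf]
    by_cases h : j < P.len ∧ k + 1 < n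
    · rw [dif_pos h, dif_pos (And.intro h.1 (Nat.lt_of_succ_lt h.2))]
      exact hanti ⟨j, h.1⟩
        (by exact Nat.le_succ k : (⟨k, Nat.lt_of_succ_lt h.2⟩ : Fin n) ≤ ⟨k + 1, h.2⟩)
    · rw [dif_neg h]
      exact Nat.zero_le _
  have hdc : ∀ j k, f (j + 1) k ≤ f j k := by
    intro j k
    simp only [hf]
    by_cases h : j + 1 < P.len ∧ k < n
    · rw [dif_pos h, dif_pos (And.intro (Nat.lt_of_succ_lt h.1) h.2)]
      exact hstep j h.1 ⟨k, h.2⟩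
    · rw [dif_neg h]
      exact Nat.zero_le _
  have hfin : (Function.support fun x : ℕ × ℕ => f x.1 x.2).Finite := by
    apply Set.Finite.subset
      ((Finset.range P.len ×ˢ Finset.range n) : Finset (ℕ × ℕ)).finite_toSet
    intro x hx
    have := hbound x.1 x.2 hx
    simp only [Finset.coe_product, Set.mem_prod, Finset.mem_coe, Finset.mem_range]
    exact ⟨this.1, this.2⟩
  have hse : (∑ᶠ (j : ℕ) (k : ℕ), f j k) = n := by
    rw [finsum_eq_sum_sum f P.len n hbound,
      ← Fin.sum_univ_eq_sum_range (fun j => ∑ k ∈ Finset.range n, f j k) P.len]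
    have hrow : ∀ j : Fin P.len, ∑ k ∈ Finset.range n, f (j : ℕ) k = m j := by
      intro j
      rw [← Fin.sum_univ_eq_sum_range (fun k => f (j : ℕ) k) n,
        Finset.sum_congr rfl fun (i : Fin n) _ => hfq j i]
      exact hsum j
    rw [Finset.sum_congr rfl fun j _ => hrow j]
    exact hsum_m
  refine ⟨⟨f, hdr, hdc, hfin, hse⟩, ?_, ?_⟩
  · intro j hrj k
    show f j k = 0
    simp only [hf]
    apply dif_neg
    rintro ⟨hjlen, -⟩
    have hlt : (j : ℕ∞) < (P.len : ℕ∞) := by exact_mod_cast hjlen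
    exact absurd (le_trans hlen hrj) (not_le.mpr hlt)
  · have hrow0 : ∀ j : ℕ, f j 0 = 0 ↔ P.len ≤ j := by
      intro j
      constructor
      · intro h0
        by_contra hcon
        push_neg at hcon
        have h1 : f j 0 = lam ⟨j, hcon⟩ ⟨0, hn⟩ := by
          simp only [hf, dif_pos (And.intro hcon hn)]
        have h2 : lam ⟨j, hcon⟩ ⟨0, hn⟩ ≠ 0 := by
          intro hz
          have hall : ∀ i : Fin n, lam ⟨j, hcon⟩ i = 0 := by
            intro i
            have hle := hanti ⟨j, hcon⟩ (show (⟨0, hn⟩ : Fin n) ≤ i by simp [Fin.le_def])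
            omega
          have hs0 := hsum ⟨j, hcon⟩
          rw [Finset.sum_congr rfl fun i _ => hall i, Finset.sum_const_zero] at hs0
          have := hm1 ⟨j, hcon⟩
          omega
        exact h2 (h1 ▸ h0)
      · intro hj
        simp only [hf]
        apply dif_neg
        rintro ⟨h1, -⟩
        omega
    have hnrows : (⟨f, hdr, hdc, hfin, hse⟩ : PlanePartition n).nrows = P.len :=
      PlanePartition.nrows_eq _ P.len hrow0
    refine ⟨hnrows, fun j0 => ?_⟩
    have hj0 : (j0 : ℕ) < P.len := lt_of_lt_of_le j0.isLt (le_of_eq hnrows)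
    have hfq2 : ∀ i : Fin n, f (j0 : ℕ) (i : ℕ) = lam ⟨(j0 : ℕ), hj0⟩ i := fun i => by
      simp only [hf, dif_pos (And.intro hj0 i.isLt), Fin.eta]
    exact ⟨(AddEquiv.piCongrRight fun i => zmodCast (congrArg (p ^ ·) (hfq2 i))).trans
      (phi ⟨(j0 : ℕ), hj0⟩).symm⟩

end Aux

/-- For a prime `p`, a positive integer `n`, and `r` a positive integer or `r = ⊤`:
`a_r(p^n) = PL_r(n)`. -/
theorem abelianCount_prime_pow_eq_planePartitionCount (p n : ℕ) (hp : p.Prime) (hn : 0 < n)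
    (r : ℕ∞) (hr : r ≠ 0) :
    abelianCount r (p ^ n) = planePartitionCount r n := by
  classical
  rw [abelianCount, planePartitionCount]
  have heqv : Equivalence (fun P Q : {P : AbGroupPartition //
      (∏ j, Nat.card (P.factor j)) = p ^ n ∧ (P.len : ℕ∞) ≤ r} => P.1.Equiv Q.1) :=
    ⟨fun P => abEquiv_refl P.1, fun h => abEquiv_symm h, fun h1 h2 => abEquiv_trans h1 h2⟩
  refine (Nat.card_congr (Equiv.ofBijective
    (fun Q : {Q : PlanePartition n // ∀ j : ℕ, r ≤ (j : ℕ∞) → ∀ k, Q.part j k = 0} =>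
      Quot.mk _ (⟨Q.1.toPart p hp hn, Q.1.toPart_card hp hn, Q.1.toPart_len_le Q.2⟩ :
        {P : AbGroupPartition // (∏ j, Nat.card (P.factor j)) = p ^ n ∧ (P.len : ℕ∞) ≤ r}))
    ⟨?_, ?_⟩)).symm
  · intro Q1 Q2 hQ
    rw [Quot.eq] at hQ
    have hrel := heqv.eqvGen_iff.mp hQ
    exact Subtype.ext (toPart_inj hp hn hrel)
  · intro x
    obtain ⟨⟨P, hcard, hlen⟩, rfl⟩ := Quot.exists_rep x
    obtain ⟨Q, hQcond, hQequiv⟩ := exists_plane hp hn P hcard hlen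
    exact ⟨⟨Q, hQcond⟩, Quot.sound hQequiv⟩
end

section
/- For every positive integer r, and also for r = ∞, the arithmetic function a_r is multiplicative: if m and n are coprime positive integers, then a_r(mn) = a_r(m) · a_r(n). -/
open scoped ENat

section Tor
variable (m n : ℕ)

/-- The subgroup of elements killed by `m`. -/
def torsub (G : Type*) [AddCommGroup G] : AddSubgroup G where
  carrier := {x | m • x = 0}
  zero_mem' := smul_zero m
  add_mem' := by
    intro a b ha hb
    simp only [Set.mem_setOf_eq, smul_add] at *
    rw [ha, hb, add_zero]
  neg_mem' := by
    intro a ha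
    simp only [Set.mem_setOf_eq, smul_neg] at *
    rw [ha, neg_zero]

variable {G H : Type*} [AddCommGroup G] [AddCommGroup H]

lemma mem_torsub {x : G} : x ∈ torsub m G ↔ m • x = 0 := Iff.rfl

/-- Restriction of a hom to `m`-torsion subgroups. -/
def torMap (f : G →+ H) : torsub m G →+ torsub m H where
  toFun x := ⟨f x.1, by
    have : m • (f x.1) = f (m • x.1) := (map_nsmul f m x.1).symm
    rw [mem_torsub, this, x.2, map_zero]⟩
  map_zero' := by ext; simp
  map_add' a b := by ext; simp

lemma torMap_injective {f : G →+ H} (hf : Function.Injective f) :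
    Function.Injective (torMap m f) := by
  intro a b hab
  have : f a.1 = f b.1 := congrArg Subtype.val hab
  exact Subtype.ext (hf this)

lemma torsub_nontrivial_of_inj {f : G →+ H} (hf : Function.Injective f)
    (hG : Nontrivial (torsub m G)) : Nontrivial (torsub m H) :=
  (torMap_injective m hf).nontrivial

/-- `m`-torsion subgroups of isomorphic groups are isomorphic. -/
noncomputable def torCongr (e : G ≃+ H) : torsub m G ≃+ torsub m H :=
  AddEquiv.ofBijective (torMap m e.toAddMonoidHom)
    ⟨torMap_injective m e.injective, by
      intro y
      refine ⟨⟨e.symm y.1, ?_⟩, Subtype.ext (by simp [torMap])⟩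
      rw [mem_torsub, ← map_nsmul e.symm m y.1, y.2, map_zero]⟩

/-- If everything is `m`-torsion, the torsion subgroup is everything. -/
def torsubEquivSelf (h : ∀ x : G, m • x = 0) : torsub m G ≃+ G where
  toFun x := x.1
  invFun x := ⟨x, h x⟩
  left_inv x := rfl
  right_inv x := rfl
  map_add' a b := rfl

/-- torsion subgroup of a product. -/
def torsubProd : torsub m (G × H) ≃+ torsub m G × torsub m H where
  toFun x := (⟨x.1.1, congrArg Prod.fst x.2⟩, ⟨x.1.2, congrArg Prod.snd x.2⟩)
  invFun x := ⟨(x.1.1, x.2.1), by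
    rw [mem_torsub, Prod.ext_iff]
    exact ⟨x.1.2, x.2.2⟩⟩
  left_inv x := rfl
  right_inv x := rfl
  map_add' a b := rfl

lemma torsub_subsingleton_coprime [Finite G] (hc : (Nat.card G).Coprime m) :
    Subsingleton (torsub m G) := by
  constructor
  intro a b
  apply Subtype.ext
  have key : ∀ x : G, m • x = 0 → x = 0 := by
    intro x hx
    have h1 : addOrderOf x ∣ m := addOrderOf_dvd_of_nsmul_eq_zero hx
    have h2 : addOrderOf x ∣ Nat.card G := addOrderOf_dvd_natCard x
    have h3 : addOrderOf x ∣ Nat.gcd (Nat.card G) m := Nat.dvd_gcd h2 h1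
    rw [hc] at h3
    have h4 : addOrderOf x = 1 := Nat.eq_one_of_dvd_one h3
    exact AddMonoid.addOrderOf_eq_one_iff.mp h4
  rw [key a.1 a.2, key b.1 b.2]
end Tor


section Split
variable (m n : ℕ) {G : Type*} [AddCommGroup G]

lemma zsmul_kill {x : G} (u : ℤ) {k : ℕ} (hx : k • x = 0) : (u * k) • x = 0 := by
  rw [mul_smul, natCast_zsmul, hx, smul_zero]

/-- CRT splitting: if `G` is killed by `m*n` with `m, n` coprime,
then `G ≃ G[m] × G[n]`. -/
lemma nonempty_torsubSplit (hG : ∀ x : G, (m * n) • x = 0) (hco : Nat.Coprime m n) :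
    Nonempty (G ≃+ torsub m G × torsub n G) := by
  have hiso : IsCoprime (m : ℤ) (n : ℤ) := Int.isCoprime_iff_gcd_eq_one.mpr hco
  obtain ⟨u, v, huv⟩ := hiso
  refine Nonempty.intro ?_
  have hmn : ∀ x : G, ((m : ℤ) * n) • x = 0 := by
    intro x
    have := hG x
    rw [← Int.natCast_mul, natCast_zsmul]
    exact this
  refine
  { toFun := fun x => (⟨(v * n) • x, ?_⟩, ⟨(u * m) • x, ?_⟩)
    invFun := fun p => p.1.1 + p.2.1
    left_inv := ?_
    right_inv := ?_
    map_add' := ?_ }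
  · rw [mem_torsub, ← natCast_zsmul, smul_smul]
    have : (m : ℤ) * (v * n) = v * (m * n) := by ring
    rw [this, mul_smul, hmn, smul_zero]
  · rw [mem_torsub, ← natCast_zsmul, smul_smul]
    have : (n : ℤ) * (u * m) = u * (m * n) := by ring
    rw [this, mul_smul, hmn, smul_zero]
  · intro x
    simp only
    rw [← add_smul]
    have : v * n + u * m = 1 := by linarith [huv]
    rw [this, one_smul]
  · rintro ⟨⟨a, ha⟩, ⟨b, hb⟩⟩
    rw [mem_torsub] at ha hb
    have hva : (v * n) • a = a := by
      have h1 : (u * m) • a = 0 := zsmul_kill u ha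
      have : (v * n) • a = (u * m + v * n) • a - (u * m) • a := by
        rw [add_smul]; abel
      rw [this, huv, one_smul, h1, sub_zero]
    have hvb : (v * n) • b = 0 := zsmul_kill v hb
    have hua : (u * m) • a = 0 := zsmul_kill u ha
    have hub : (u * m) • b = b := by
      have : (u * m) • b = (u * m + v * n) • b - (v * n) • b := by
        rw [add_smul]; abel
      rw [this, huv, one_smul, hvb, sub_zero]
    ext
    · simp only [smul_add]
      rw [hva, hvb, add_zero]
    · simp only [smul_add]
      rw [hua, hub, zero_add]
  · intro x y
    ext <;> simp [smul_add]

lemma card_torsub_mul [Finite G] (hG : ∀ x : G, (m * n) • x = 0) (hco : Nat.Coprime m n) :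
    Nat.card (torsub m G) * Nat.card (torsub n G) = Nat.card G := by
  rw [Nat.card_congr (nonempty_torsubSplit m n hG hco).some.toEquiv, Nat.card_prod]

lemma nontrivial_torsub_or [Finite G] (hG : ∀ x : G, (m * n) • x = 0) (hco : Nat.Coprime m n)
    (hnt : Nontrivial G) : Nontrivial (torsub m G) ∨ Nontrivial (torsub n G) := by
  by_contra hc
  push_neg at hc
  obtain ⟨h1, h2⟩ := hc
  have : Subsingleton (torsub m G × torsub n G) := inferInstance
  have := (nonempty_torsubSplit m n hG hco).some.toEquiv.subsingleton
  exact (not_subsingleton_iff_nontrivial.mpr hnt) this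

lemma prime_dvd_of_dvd_card_torsub [Finite G] {p : ℕ} (hp : p.Prime)
    (hd : p ∣ Nat.card (torsub m G)) : p ∣ m := by
  have : Fintype (torsub m G) := Fintype.ofFinite _
  rw [Nat.card_eq_fintype_card] at hd
  haveI : Fact p.Prime := ⟨hp⟩
  obtain ⟨x, hx⟩ := exists_prime_addOrderOf_dvd_card (G := torsub m G) p hd
  have hxm : m • x = 0 := by
    apply Subtype.ext
    have h2 : x.1 ∈ torsub m G := x.2
    rw [mem_torsub] at h2
    simpa using h2
  have : addOrderOf x ∣ m := addOrderOf_dvd_of_nsmul_eq_zero hxm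
  rwa [hx] at this

end Split

namespace AbGroupPartition

/-- Extension of the factor sequence: the subgroup of the product supported at coordinate
`j` (trivial if `j ≥ len`). -/
def pextend (P : AbGroupPartition) (j : ℕ) : AddSubgroup ((i : Fin P.len) → P.factor i) where
  carrier := {f | ∀ i : Fin P.len, i.1 ≠ j → f i = 0}
  zero_mem' := fun i _ => rfl
  add_mem' := by
    intro a b ha hb i hi
    show a i + b i = 0
    rw [ha i hi, hb i hi, add_zero]
  neg_mem' := by
    intro a ha i hi
    show -(a i) = 0
    rw [ha i hi, neg_zero]

instance (P : AbGroupPartition) (j : ℕ) : Finite (P.pextend j) := by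
  have : Finite ((i : Fin P.len) → P.factor i) := inferInstance
  exact Subtype.finite

/-- When `j < len`, the extension is the `j`-th factor. -/
noncomputable def pextendEquiv (P : AbGroupPartition) {j : ℕ} (h : j < P.len) :
    P.pextend j ≃+ P.factor ⟨j, h⟩ := by
  classical
  refine
  { toFun := fun f => f.1 ⟨j, h⟩
    invFun := fun x => ⟨Pi.single ⟨j, h⟩ x, fun i hi => Pi.single_eq_of_ne (by
      intro he; exact hi (by rw [he])) x⟩
    left_inv := ?_
    right_inv := fun x => Pi.single_eq_same _ x
    map_add' := fun a b => rfl }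
  · rintro ⟨f, hf⟩
    apply Subtype.ext
    funext i
    by_cases hij : i = ⟨j, h⟩
    · subst hij; exact Pi.single_eq_same _ _
    · show Pi.single ⟨j, h⟩ (f ⟨j, h⟩) i = f i
      rw [Pi.single_eq_of_ne hij, hf i (by
        intro he; exact hij (Fin.ext he))]

lemma pextend_subsingleton (P : AbGroupPartition) {j : ℕ} (h : ¬ j < P.len) :
    Subsingleton (P.pextend j) := by
  constructor
  rintro ⟨a, ha⟩ ⟨b, hb⟩
  apply Subtype.ext
  funext i
  show a i = b i
  rw [ha i (by omega), hb i (by omega)]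

lemma card_pextend_of_lt (P : AbGroupPartition) {j : ℕ} (h : j < P.len) :
    Nat.card (P.pextend j) = Nat.card (P.factor ⟨j, h⟩) :=
  Nat.card_congr (P.pextendEquiv h).toEquiv

lemma card_pextend_of_ge (P : AbGroupPartition) {j : ℕ} (h : ¬ j < P.len) :
    Nat.card (P.pextend j) = 1 := by
  have := P.pextend_subsingleton h
  exact Nat.card_of_subsingleton 0

/-- The step embedding for extensions. -/
lemma pextend_mono (P : AbGroupPartition) (j : ℕ) :
    ∃ f : P.pextend (j + 1) →+ P.pextend j, Function.Injective f := by
  by_cases h : j + 1 < P.len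
  · obtain ⟨g, hg⟩ := P.mono j h
    have hj : j < P.len := Nat.lt_of_succ_lt h
    refine ⟨((P.pextendEquiv hj).symm.toAddMonoidHom.comp g).comp
      (P.pextendEquiv h).toAddMonoidHom, ?_⟩
    intro a b hab
    simp only [AddMonoidHom.comp_apply, AddMonoidHom.coe_coe] at hab
    have := hg ((P.pextendEquiv hj).symm.injective hab)
    exact (P.pextendEquiv h).injective this
  · have := P.pextend_subsingleton h
    exact ⟨0, fun a b _ => Subsingleton.elim a b⟩

end AbGroupPartition

/-- An AddEquiv between two subsingleton groups. -/
def addEquivOfSubsingleton {A B : Type*} [AddCommGroup A] [AddCommGroup B]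
    [Subsingleton A] [Subsingleton B] : A ≃+ B where
  toFun _ := 0
  invFun _ := 0
  left_inv a := Subsingleton.elim _ _
  right_inv b := Subsingleton.elim _ _
  map_add' a b := (Subsingleton.elim _ _)

namespace AbGroupPartition

/-- Merge two partitions coordinatewise. -/
def merge (P Q : AbGroupPartition) : AbGroupPartition where
  len := max P.len Q.len
  factor j := P.pextend j.1 × Q.pextend j.1
  nontriv j := by
    have hj := j.2
    rcases lt_max_iff.mp hj with h | h
    · haveI := P.nontriv ⟨j.1, h⟩
      haveI : Nontrivial (P.pextend j.1) := (P.pextendEquiv h).toEquiv.nontrivial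
      exact nontrivial_prod_left
    · haveI := Q.nontriv ⟨j.1, h⟩
      haveI : Nontrivial (Q.pextend j.1) := (Q.pextendEquiv h).toEquiv.nontrivial
      exact nontrivial_prod_right
  mono j h := by
    obtain ⟨f, hf⟩ := P.pextend_mono j
    obtain ⟨g, hg⟩ := Q.pextend_mono j
    exact ⟨f.prodMap g, hf.prodMap hg⟩

lemma prod_card_pextend (P : AbGroupPartition) {L : ℕ} (hL : P.len ≤ L) :
    ∏ j ∈ Finset.range L, Nat.card (P.pextend j) = ∏ j, Nat.card (P.factor j) := by
  rw [← Finset.prod_subset (Finset.range_subset_range.mpr hL) (fun x _ hx => by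
    rw [Finset.mem_range, not_lt] at hx
    exact P.card_pextend_of_ge (by omega))]
  rw [← Fin.prod_univ_eq_prod_range (fun j => Nat.card (P.pextend j)) P.len]
  apply Finset.prod_congr rfl
  intro j _
  rw [P.card_pextend_of_lt j.2]

lemma merge_card (P Q : AbGroupPartition) :
    (∏ j, Nat.card ((P.merge Q).factor j)) =
      (∏ j, Nat.card (P.factor j)) * (∏ j, Nat.card (Q.factor j)) := by
  have h1 : ∀ j : Fin (P.merge Q).len,
      Nat.card ((P.merge Q).factor j) = Nat.card (P.pextend j.1) * Nat.card (Q.pextend j.1) :=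
    fun j => Nat.card_prod _ _
  rw [Finset.prod_congr rfl (fun j _ => h1 j), Finset.prod_mul_distrib]
  have hlen : (P.merge Q).len = max P.len Q.len := rfl
  congr 1
  · rw [Fin.prod_univ_eq_prod_range (fun j => Nat.card (P.pextend j)) (P.merge Q).len, hlen,
      P.prod_card_pextend (le_max_left _ _)]
  · rw [Fin.prod_univ_eq_prod_range (fun j => Nat.card (Q.pextend j)) (P.merge Q).len, hlen,
      Q.prod_card_pextend (le_max_right _ _)]

end AbGroupPartition

namespace AbGroupPartition

variable (P : AbGroupPartition) (m : ℕ)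

/-- coordinate `j` has nontrivial `m`-torsion. -/
def TProp (j : ℕ) : Prop := ∃ h : j < P.len, Nontrivial (torsub m (P.factor ⟨j, h⟩))

lemma tprop_step {j : ℕ} (h : P.TProp m (j + 1)) : P.TProp m j := by
  obtain ⟨hj, hnt⟩ := h
  obtain ⟨f, hf⟩ := P.mono j hj
  exact ⟨Nat.lt_of_succ_lt hj, torsub_nontrivial_of_inj m hf hnt⟩

lemma tprop_exists_not : ∃ j, ¬ P.TProp m j := ⟨P.len, fun ⟨h, _⟩ => lt_irrefl _ h⟩

open Classical in
/-- Length of the `m`-torsion part: the number of factors with nontrivial `m`-torsion. -/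
noncomputable def splitLen : ℕ := Nat.find (P.tprop_exists_not m)

lemma not_tprop_splitLen : ¬ P.TProp m (P.splitLen m) := by
  classical
  exact Nat.find_spec (P.tprop_exists_not m)

lemma tprop_of_lt {j : ℕ} (hj : j < P.splitLen m) : P.TProp m j := by
  classical
  have := Nat.find_min (P.tprop_exists_not m) hj
  exact not_not.mp this

lemma tprop_down (a : ℕ) : ∀ d : ℕ, P.TProp m (a + d) → P.TProp m a := by
  intro d
  induction d with
  | zero => exact fun h => h
  | succ d ih => exact fun h => ih (P.tprop_step m (by rwa [Nat.add_succ] at h))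

lemma not_tprop_of_ge {j : ℕ} (hj : P.splitLen m ≤ j) : ¬ P.TProp m j := by
  intro hT
  apply P.not_tprop_splitLen m
  obtain ⟨d, rfl⟩ := Nat.exists_eq_add_of_le hj
  exact P.tprop_down m _ d hT

lemma lt_splitLen_iff {j : ℕ} : j < P.splitLen m ↔ P.TProp m j := by
  constructor
  · exact P.tprop_of_lt m
  · intro hT
    by_contra hc
    exact P.not_tprop_of_ge m (not_lt.mp hc) hT

lemma splitLen_le : P.splitLen m ≤ P.len := by
  classical
  exact Nat.find_le (fun ⟨h, _⟩ => lt_irrefl _ h)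

/-- The `m`-torsion part of a partition. -/
noncomputable def split : AbGroupPartition where
  len := P.splitLen m
  factor j := torsub m (P.factor ⟨j.1, lt_of_lt_of_le j.2 (P.splitLen_le m)⟩)
  nontriv j := by
    obtain ⟨h, hnt⟩ := P.tprop_of_lt m j.2
    exact hnt
  mono j h := by
    obtain ⟨f, hf⟩ := P.mono j (lt_of_lt_of_le h (P.splitLen_le m))
    exact ⟨torMap m f, torMap_injective m hf⟩

end AbGroupPartition

lemma killed_of_card_dvd {G : Type*} [AddCommGroup G] [Finite G] {K : ℕ}
    (hd : Nat.card G ∣ K) (x : G) : K • x = 0 := by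
  obtain ⟨c, rfl⟩ := hd
  have hcard : (Nat.card G) • x = 0 := by
    have := Fintype.ofFinite G
    rw [Nat.card_eq_fintype_card]
    exact card_nsmul_eq_zero
  rw [mul_comm, mul_smul, hcard, smul_zero]

namespace AbGroupPartition

variable (P : AbGroupPartition) (m n : ℕ)

lemma card_pextend_dvd {N : ℕ} (hP : (∏ j, Nat.card (P.factor j)) = N) (j : ℕ) :
    Nat.card (P.pextend j) ∣ N := by
  by_cases h : j < P.len
  · rw [P.card_pextend_of_lt h, ← hP]
    exact Finset.dvd_prod_of_mem _ (Finset.mem_univ (⟨j, h⟩ : Fin P.len))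
  · rw [P.card_pextend_of_ge h]
    exact one_dvd N

lemma torsub_pextend_subsingleton_of_ge {j : ℕ} (hj : P.splitLen m ≤ j) :
    Subsingleton (torsub m (P.pextend j)) := by
  by_cases h : j < P.len
  · have hns := P.not_tprop_of_ge m hj
    haveI hsub : Subsingleton (torsub m (P.factor ⟨j, h⟩)) := by
      rw [← not_nontrivial_iff_subsingleton]
      exact fun hnt => hns ⟨h, hnt⟩
    exact (torCongr m (P.pextendEquiv h)).toEquiv.subsingleton
  · haveI := P.pextend_subsingleton h
    exact inferInstance

/-- The product of the cards of the `m`-torsion parts, over *all* coordinates. -/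
lemma card_split_eq (hm : P.splitLen m ≤ P.len) :
    (∏ j, Nat.card ((P.split m).factor j)) =
      ∏ j ∈ Finset.range P.len, Nat.card (torsub m (P.pextend j)) := by
  have h1 : (∏ j, Nat.card ((P.split m).factor j)) =
      ∏ j ∈ Finset.range (P.splitLen m), Nat.card (torsub m (P.pextend j)) := by
    rw [← Fin.prod_univ_eq_prod_range (fun j => Nat.card (torsub m (P.pextend j)))
      (P.splitLen m)]
    apply Finset.prod_congr rfl
    intro j _
    have hlt : (j : ℕ) < P.len := lt_of_lt_of_le j.2 (P.splitLen_le m)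
    exact Nat.card_congr (torCongr m (P.pextendEquiv hlt)).symm.toEquiv
  rw [h1]
  apply Finset.prod_subset (Finset.range_subset_range.mpr (P.splitLen_le m))
  intro x _ hx
  rw [Finset.mem_range, not_lt] at hx
  have := P.torsub_pextend_subsingleton_of_ge m hx
  exact Nat.card_of_subsingleton 0

lemma full_mul (hco : Nat.Coprime m n) (hP : (∏ j, Nat.card (P.factor j)) = m * n) :
    (∏ j ∈ Finset.range P.len, Nat.card (torsub m (P.pextend j))) *
      (∏ j ∈ Finset.range P.len, Nat.card (torsub n (P.pextend j))) = m * n := by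
  rw [← Finset.prod_mul_distrib]
  have h1 : ∀ j ∈ Finset.range P.len,
      Nat.card (torsub m (P.pextend j)) * Nat.card (torsub n (P.pextend j)) =
        Nat.card (P.pextend j) := by
    intro j _
    exact card_torsub_mul m n
      (fun x => killed_of_card_dvd (P.card_pextend_dvd (N := m * n) hP j) x) hco
  rw [Finset.prod_congr rfl h1, P.prod_card_pextend (le_refl _), hP]

lemma prime_dvd_full {p : ℕ} (hp : p.Prime)
    (hd : p ∣ ∏ j ∈ Finset.range P.len, Nat.card (torsub m (P.pextend j))) : p ∣ m := by
  obtain ⟨j, _, hj⟩ := hp.prime.exists_mem_finset_dvd hd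
  exact prime_dvd_of_dvd_card_torsub m hp hj

/-- Main counting lemma: the `m`-part of a partition of order `m*n` has order `m`. -/
lemma split_card (hco : Nat.Coprime m n) (hm : 0 < m) (hn : 0 < n)
    (hP : (∏ j, Nat.card (P.factor j)) = m * n) :
    (∏ j, Nat.card ((P.split m).factor j)) = m := by
  set M := ∏ j ∈ Finset.range P.len, Nat.card (torsub m (P.pextend j)) with hM
  set N := ∏ j ∈ Finset.range P.len, Nat.card (torsub n (P.pextend j)) with hN
  have hMN : M * N = m * n := P.full_mul m n hco hP
  have hMcop : Nat.Coprime M n := by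
    by_contra hc
    obtain ⟨p, hp, hpM, hpn⟩ := Nat.Prime.not_coprime_iff_dvd.mp hc
    have hpm : p ∣ m := P.prime_dvd_full m hp hpM
    have : ¬ Nat.Coprime m n := Nat.Prime.not_coprime_iff_dvd.mpr ⟨p, hp, hpm, hpn⟩
    exact this hco
  have hNcop : Nat.Coprime N m := by
    by_contra hc
    obtain ⟨p, hp, hpN, hpm⟩ := Nat.Prime.not_coprime_iff_dvd.mp hc
    have hpn : p ∣ n := P.prime_dvd_full n hp hpN
    have : ¬ Nat.Coprime m n := Nat.Prime.not_coprime_iff_dvd.mpr ⟨p, hp, hpm, hpn⟩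
    exact this hco
  have hMdvd : M ∣ m := hMcop.dvd_of_dvd_mul_right ⟨N, hMN.symm⟩
  have hNdvd : N ∣ n := by
    apply hNcop.dvd_of_dvd_mul_right
    exact ⟨M, by rw [mul_comm n m, ← hMN, mul_comm]⟩
  have hMm : M = m := by
    have hMle : M ≤ m := Nat.le_of_dvd hm hMdvd
    have hNle : N ≤ n := Nat.le_of_dvd hn hNdvd
    have hMpos : 0 < M := Nat.pos_of_dvd_of_pos hMdvd hm
    have hNpos : 0 < N := Nat.pos_of_dvd_of_pos hNdvd hn
    nlinarith
  rw [P.card_split_eq m (P.splitLen_le m), ← hM, hMm]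

end AbGroupPartition

namespace AbGroupPartition

variable {P Q P' Q' : AbGroupPartition} (m n : ℕ)

lemma tprop_congr (hPQ : P.Equiv Q) (j : ℕ) : P.TProp m j ↔ Q.TProp m j := by
  obtain ⟨hlen, hfac⟩ := hPQ
  constructor
  · rintro ⟨h, nt⟩
    refine ⟨hlen ▸ h, ?_⟩
    have e := (hfac ⟨j, h⟩).some
    exact (torCongr m e).toEquiv.symm.nontrivial
  · rintro ⟨h, nt⟩
    have hP : j < P.len := hlen ▸ h
    refine ⟨hP, ?_⟩
    have e := (hfac ⟨j, hP⟩).some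
    haveI : Nontrivial (torsub m (Q.factor (Fin.cast hlen ⟨j, hP⟩))) := nt
    exact (torCongr m e).toEquiv.nontrivial

lemma splitLen_congr (hPQ : P.Equiv Q) : P.splitLen m = Q.splitLen m := by
  classical
  apply le_antisymm
  · exact Nat.find_le (fun hT => (Q.not_tprop_splitLen m) ((tprop_congr m hPQ _).mp hT))
  · exact Nat.find_le (fun hT => (P.not_tprop_splitLen m) ((tprop_congr m hPQ _).mpr hT))

lemma split_congr (hPQ : P.Equiv Q) : (P.split m).Equiv (Q.split m) := by
  obtain ⟨hlen, hfac⟩ := hPQ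
  refine ⟨splitLen_congr m ⟨hlen, hfac⟩, ?_⟩
  intro j
  have hj : (j : ℕ) < P.len := lt_of_lt_of_le j.2 (P.splitLen_le m)
  exact ⟨torCongr m (hfac ⟨j.1, hj⟩).some⟩

lemma pextend_congr (hPQ : P.Equiv Q) (j : ℕ) : Nonempty (P.pextend j ≃+ Q.pextend j) := by
  obtain ⟨hlen, hfac⟩ := hPQ
  by_cases h : j < P.len
  · have hQ : j < Q.len := hlen ▸ h
    exact ⟨((P.pextendEquiv h).trans (hfac ⟨j, h⟩).some).trans (Q.pextendEquiv hQ).symm⟩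
  · haveI := P.pextend_subsingleton h
    haveI := Q.pextend_subsingleton (by rw [← hlen]; exact h)
    exact ⟨addEquivOfSubsingleton⟩

lemma merge_congr (h1 : P.Equiv P') (h2 : Q.Equiv Q') : (P.merge Q).Equiv (P'.merge Q') := by
  refine ⟨by show max _ _ = max _ _; rw [h1.1, h2.1], ?_⟩
  intro j
  exact ⟨AddEquiv.prodCongr (pextend_congr h1 j.1).some (pextend_congr h2 j.1).some⟩

variable (P Q)

/-- extension of the `m`-part, as the `m`-torsion of the factor. -/
lemma pextend_split (j : ℕ) (hj : j < P.len) :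
    Nonempty ((P.split m).pextend j ≃+ torsub m (P.factor ⟨j, hj⟩)) := by
  by_cases h : j < P.splitLen m
  · exact ⟨(P.split m).pextendEquiv h⟩
  · haveI := (P.split m).pextend_subsingleton (by simpa [split] using h)
    haveI : Subsingleton (torsub m (P.factor ⟨j, hj⟩)) := by
      rw [← not_nontrivial_iff_subsingleton]
      exact fun nt => P.not_tprop_of_ge m (not_lt.mp h) ⟨hj, nt⟩
    exact ⟨addEquivOfSubsingleton⟩

/-- Round trip A: merging the `m`- and `n`-parts recovers the partition. -/
lemma merge_split_equiv (hco : Nat.Coprime m n)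
    (hP : (∏ j, Nat.card (P.factor j)) = m * n) :
    ((P.split m).merge (P.split n)).Equiv P := by
  have hkill : ∀ j : Fin P.len, ∀ x : P.factor j, (m * n) • x = 0 := by
    intro j x
    apply killed_of_card_dvd (K := m * n) _ x
    rw [← hP]
    exact Finset.dvd_prod_of_mem _ (Finset.mem_univ j)
  have hlen : max (P.splitLen m) (P.splitLen n) = P.len := by
    apply le_antisymm
    · exact max_le (P.splitLen_le m) (P.splitLen_le n)
    · by_contra hc
      push_neg at hc
      have hmax : max (P.splitLen m) (P.splitLen n) < P.len := hc
      set j := max (P.splitLen m) (P.splitLen n)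
      haveI := P.nontriv ⟨j, hmax⟩
      rcases nontrivial_torsub_or m n (G := P.factor ⟨j, hmax⟩) (hkill ⟨j, hmax⟩) hco
        inferInstance with hnt | hnt
      · exact absurd ((P.lt_splitLen_iff m).mpr ⟨hmax, hnt⟩) (by omega)
      · exact absurd ((P.lt_splitLen_iff n).mpr ⟨hmax, hnt⟩) (by omega)
  refine ⟨hlen, ?_⟩
  intro j
  have hjP : (j : ℕ) < P.len := hlen ▸ j.2
  have e1 := (pextend_split P m j.1 hjP).some
  have e2 := (pextend_split P n j.1 hjP).some
  have e3 := (nonempty_torsubSplit m n (G := P.factor ⟨j.1, hjP⟩) (hkill _) hco).some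
  exact ⟨(AddEquiv.prodCongr e1 e2).trans e3.symm⟩

/-- Key computation for round trip B. -/
lemma torsub_merge_factor (hco : Nat.Coprime m n)
    (hP : (∏ j, Nat.card (P.factor j)) = m) (hQ : (∏ j, Nat.card (Q.factor j)) = n)
    (j : ℕ) : Nonempty (torsub m (P.pextend j × Q.pextend j) ≃+ P.pextend j) := by
  haveI : Subsingleton (torsub m (Q.pextend j)) := by
    apply torsub_subsingleton_coprime
    exact Nat.Coprime.coprime_dvd_left (Q.card_pextend_dvd hQ j) hco.symm
  haveI : Unique (torsub m (Q.pextend j)) := by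
    haveI : Inhabited (torsub m (Q.pextend j)) := ⟨0⟩
    exact Unique.mk' _
  have eA : torsub m (P.pextend j) ≃+ P.pextend j :=
    torsubEquivSelf m (fun x => killed_of_card_dvd (P.card_pextend_dvd hP j) x)
  exact ⟨((torsubProd m).trans AddEquiv.prodUnique).trans eA⟩

/-- Round trip B: the `m`-part of a merge is the first component. -/
lemma split_merge_equiv (hco : Nat.Coprime m n)
    (hP : (∏ j, Nat.card (P.factor j)) = m) (hQ : (∏ j, Nat.card (Q.factor j)) = n) :
    ((P.merge Q).split m).Equiv P := by
  classical
  have key : ∀ j : ℕ, (P.merge Q).TProp m j ↔ j < P.len := by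
    intro j
    constructor
    · rintro ⟨h, nt⟩
      have e := (torsub_merge_factor P Q m n hco hP hQ j).some
      haveI : Nontrivial (torsub m (P.pextend j × Q.pextend j)) := nt
      haveI : Nontrivial (P.pextend j) := e.symm.toEquiv.nontrivial
      by_contra hc
      haveI := P.pextend_subsingleton hc
      exact false_of_nontrivial_of_subsingleton (P.pextend j)
    · intro hj
      have hR : j < (P.merge Q).len := lt_of_lt_of_le hj (le_max_left _ _)
      refine ⟨hR, ?_⟩
      have e := (torsub_merge_factor P Q m n hco hP hQ j).some
      haveI := P.nontriv ⟨j, hj⟩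
      haveI : Nontrivial (P.pextend j) := (P.pextendEquiv hj).toEquiv.nontrivial
      exact e.toEquiv.nontrivial
  have hlen : (P.merge Q).splitLen m = P.len := by
    apply le_antisymm
    · exact Nat.find_le (fun hT => lt_irrefl _ ((key P.len).mp hT))
    · by_contra hc
      push_neg at hc
      exact (P.merge Q).not_tprop_splitLen m ((key _).mpr hc)
  refine ⟨hlen, ?_⟩
  intro j
  have hjR : (j : ℕ) < (P.merge Q).len := lt_of_lt_of_le j.2 ((P.merge Q).splitLen_le m)
  have hjP : (j : ℕ) < P.len := hlen ▸ j.2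
  have e := (torsub_merge_factor P Q m n hco hP hQ j.1).some
  exact ⟨e.trans (P.pextendEquiv hjP)⟩

end AbGroupPartition

namespace AbGroupPartition

lemma equiv_refl (P : AbGroupPartition) : P.Equiv P :=
  ⟨rfl, fun j => ⟨AddEquiv.refl _⟩⟩

lemma equiv_trans {P Q R : AbGroupPartition} (h1 : P.Equiv Q) (h2 : Q.Equiv R) :
    P.Equiv R := by
  obtain ⟨e1, f1⟩ := h1
  obtain ⟨e2, f2⟩ := h2
  exact ⟨e1.trans e2, fun j => ⟨(f1 j).some.trans (f2 (Fin.cast e1 j)).some⟩⟩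

lemma merge_comm (P Q : AbGroupPartition) : (P.merge Q).Equiv (Q.merge P) :=
  ⟨max_comm _ _, fun j => ⟨AddEquiv.prodComm⟩⟩

end AbGroupPartition

section Main

variable (r : ℕ∞) (m n : ℕ)

/-- The subtype of partitions of total order `N` with at most `r` parts. -/
def PartsOf (N : ℕ) : Type 1 :=
  {P : AbGroupPartition // (∏ j, Nat.card (P.factor j)) = N ∧ (P.len : ℕ∞) ≤ r}

/-- Isomorphism classes of partitions of total order `N` with at most `r` parts. -/
def QuotOf (N : ℕ) : Type 1 := Quot fun P Q : PartsOf r N => P.1.Equiv Q.1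

variable (hco : Nat.Coprime m n) (hm : 0 < m) (hn : 0 < n)

/-- Extracting the `m`-part. -/
noncomputable def splitElM (P : PartsOf r (m * n)) : PartsOf r m :=
  ⟨P.1.split m, P.1.split_card m n hco hm hn P.2.1,
    le_trans (Nat.cast_le.mpr (P.1.splitLen_le m)) P.2.2⟩

/-- Extracting the `n`-part. -/
noncomputable def splitElN (P : PartsOf r (m * n)) : PartsOf r n :=
  ⟨P.1.split n, P.1.split_card n m hco.symm hn hm (P.2.1.trans (mul_comm m n)),
    le_trans (Nat.cast_le.mpr (P.1.splitLen_le n)) P.2.2⟩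

/-- Merging an `m`-part and an `n`-part. -/
noncomputable def mergeEl (P : PartsOf r m) (Q : PartsOf r n) : PartsOf r (m * n) :=
  ⟨P.1.merge Q.1, by rw [AbGroupPartition.merge_card, P.2.1, Q.2.1], by
    show ((max P.1.len Q.1.len : ℕ) : ℕ∞) ≤ r
    rcases max_choice P.1.len Q.1.len with hc | hc <;> rw [hc]
    · exact P.2.2
    · exact Q.2.2⟩

/-- The main bijection. -/
noncomputable def mainEquiv : QuotOf r (m * n) ≃ QuotOf r m × QuotOf r n where
  toFun := Quot.lift
    (fun P => (Quot.mk _ (splitElM r m n hco hm hn P), Quot.mk _ (splitElN r m n hco hm hn P)))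
    (by
      intro P Q hPQ
      refine Prod.ext ?_ ?_ <;> dsimp only
      · exact Quot.sound (AbGroupPartition.split_congr m hPQ)
      · exact Quot.sound (AbGroupPartition.split_congr n hPQ))
  invFun := fun pq =>
    Quot.lift (fun P => Quot.lift (fun Q => Quot.mk _ (mergeEl r m n P Q))
        (fun Q Q' hQQ => Quot.sound (AbGroupPartition.merge_congr (P.1.equiv_refl) hQQ)))
      (fun P P' hPP => by
        funext qq
        induction qq using Quot.ind with
        | _ Q => exact Quot.sound (AbGroupPartition.merge_congr hPP (Q.1.equiv_refl)))
      pq.1 pq.2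
  left_inv := by
    apply Quot.ind
    intro P
    exact Quot.sound (AbGroupPartition.merge_split_equiv P.1 m n hco P.2.1)
  right_inv := by
    rintro ⟨qp, qq⟩
    induction qp using Quot.ind with
    | _ P =>
      induction qq using Quot.ind with
      | _ Q =>
        refine Prod.ext ?_ ?_ <;> dsimp only
        · exact Quot.sound (AbGroupPartition.split_merge_equiv P.1 Q.1 m n hco P.2.1 Q.2.1)
        · refine Quot.sound (AbGroupPartition.equiv_trans
            (AbGroupPartition.split_congr n (AbGroupPartition.merge_comm P.1 Q.1)) ?_)
          exact AbGroupPartition.split_merge_equiv Q.1 P.1 n m hco.symm Q.2.1 P.2.1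

lemma abelianCount_eq_card (N : ℕ) : abelianCount r N = Nat.card (QuotOf r N) := rfl

end Main

/-- The arithmetic function `a_r` is multiplicative: `a_r(mn) = a_r(m)·a_r(n)` for coprime
positive integers `m, n`, for `r` a positive integer or `r = ⊤`. -/
theorem abelianCount_multiplicative (r : ℕ∞) (hr : r ≠ 0) (m n : ℕ) (hm : 0 < m) (hn : 0 < n)
    (h : Nat.Coprime m n) :
    abelianCount r (m * n) = abelianCount r m * abelianCount r n := by
  rw [abelianCount_eq_card, abelianCount_eq_card, abelianCount_eq_card,
    Nat.card_congr (mainEquiv r m n h hm hn), Nat.card_prod]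
end
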